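/- Define distributions on the scheme Γ^{[0,n]} = Spec ℤ[u]/(u(u−1)⋯(u−n)) as linear functionals ℤ[u] → ℤ vanishing on the ideal (u(u−1)⋯(u−n)), and let δ_k be evaluation at k. Then for every n ≥ 0: (i) (δ₁ − δ₀)^n (convolution power, where δ_a·δ_b = δ_{a+b} extended bilinearly) lies in n!·Distr(Γ^{[0,n]}); (ii) the elements (δ₁−δ₀)^n/n!, n ≥ 0, form a ℤ-basis of Distr(Γ⁺) = colim_N Distr(Γ^{[0,N]}). -/

import Mathlib

open Polynomial Finset fwdDiff

/-- f_{0,n}(u) = u(u−1)⋯(u−n). -/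
noncomputable def f0 (n : ℕ) : Polynomial ℤ :=
  ∏ i ∈ Finset.range (n + 1), (Polynomial.X - Polynomial.C (i : ℤ))

/-- convolution of two distributions (functionals on ℤ[u]), dual to the coproduct
u ↦ u⊗1 + 1⊗u: (φ*ψ)(f) = Σ_k φ(c_k)·ψ(uᵏ) where f(x+y) = Σ_k c_k(x)·yᵏ. -/
noncomputable def conv (φ ψ : Polynomial ℤ → ℤ) : Polynomial ℤ → ℤ := fun f =>
  (f.eval₂
      ((Polynomial.C : Polynomial ℤ →+* Polynomial (Polynomial ℤ)).comp
        (Polynomial.C : ℤ →+* Polynomial ℤ))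
      ((Polynomial.X : Polynomial (Polynomial ℤ)) + Polynomial.C Polynomial.X)).sum
    fun k c => φ c * ψ (Polynomial.X ^ k)

/-- convolution powers, with unit δ₀ = evaluation at 0. -/
noncomputable def convPow (φ : Polynomial ℤ → ℤ) : ℕ → (Polynomial ℤ → ℤ)
  | 0 => fun f => f.eval 0
  | n + 1 => conv φ (convPow φ n)

/-- δ₁ − δ₀. -/
noncomputable def dd : Polynomial ℤ → ℤ := fun f => f.eval 1 - f.eval 0

lemma eval_F (f : Polynomial ℤ) (a j : ℤ) :
    (f.eval₂ ((C : Polynomial ℤ →+* Polynomial (Polynomial ℤ)).comp C)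
        ((X : Polynomial (Polynomial ℤ)) + C X)).eval₂ (evalRingHom a) j = f.eval (j + a) := by
  rw [show (Polynomial.eval₂ (evalRingHom a) j :
      Polynomial (Polynomial ℤ) → ℤ) = (eval₂RingHom (evalRingHom a) j : _ →+* ℤ) from rfl]
  rw [Polynomial.hom_eval₂]
  have h1 : ((eval₂RingHom (evalRingHom a) j).comp
      ((C : Polynomial ℤ →+* Polynomial (Polynomial ℤ)).comp C)) = Int.castRingHom ℤ := by
    ext x
    simp
  have h2 : (eval₂RingHom (evalRingHom a) j) ((X : Polynomial (Polynomial ℤ)) + C X) = j + a := by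
    simp
  rw [h1, h2]
  simp [eval₂_eq_eval_map]

lemma key (n : ℕ) (f : Polynomial ℤ) :
    convPow dd n f = (fwdDiff (1:ℤ))^[n] (fun x => f.eval x) 0 := by
  induction n generalizing f with
  | zero => simp [convPow]
  | succ n ih =>
    have hmono : ∀ k : ℕ, convPow dd n (X ^ k)
        = ∑ j ∈ range (n + 1), ((-1 : ℤ) ^ (n - j) * (n.choose j)) * (j : ℤ) ^ k := by
      intro k
      rw [ih, fwdDiff_iter_eq_sum_shift]
      simp [zsmul_eq_mul, nsmul_eq_mul]
    have hRHS : (fwdDiff (1:ℤ))^[n+1] (fun x => f.eval x) 0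
        = ∑ j ∈ range (n + 1), ((-1 : ℤ) ^ (n - j) * (n.choose j)) *
            (f.eval ((j : ℤ) + 1) - f.eval (j : ℤ)) := by
      rw [Function.iterate_succ_apply, fwdDiff_iter_eq_sum_shift]
      simp [zsmul_eq_mul, nsmul_eq_mul, fwdDiff]
    rw [hRHS]
    show (Polynomial.sum _ fun k c => dd c * convPow dd n (X ^ k)) = _
    set F := (f.eval₂ ((C : Polynomial ℤ →+* Polynomial (Polynomial ℤ)).comp C)
        ((X : Polynomial (Polynomial ℤ)) + C X)) with hF
    have heval : ∀ a j : ℤ, (∑ k ∈ F.support, (F.coeff k).eval a * j ^ k) = f.eval (j + a) := by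
      intro a j
      rw [← eval_F f a j, eval₂_eq_sum, Polynomial.sum_def]
      rfl
    rw [Polynomial.sum_def]
    calc ∑ k ∈ F.support, dd (F.coeff k) * convPow dd n (X ^ k)
        = ∑ k ∈ F.support, ∑ j ∈ range (n + 1),
            ((-1 : ℤ) ^ (n - j) * (n.choose j)) *
              ((F.coeff k).eval 1 * (j:ℤ) ^ k - (F.coeff k).eval 0 * (j:ℤ) ^ k) := by
          refine Finset.sum_congr rfl fun k _ => ?_
          rw [hmono, Finset.mul_sum]
          refine Finset.sum_congr rfl fun j _ => ?_
          simp only [dd]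
          ring
      _ = ∑ j ∈ range (n + 1), ((-1 : ℤ) ^ (n - j) * (n.choose j)) *
            ((∑ k ∈ F.support, (F.coeff k).eval 1 * (j:ℤ) ^ k)
              - (∑ k ∈ F.support, (F.coeff k).eval 0 * (j:ℤ) ^ k)) := by
          rw [Finset.sum_comm]
          refine Finset.sum_congr rfl fun j _ => ?_
          rw [mul_sub, Finset.mul_sum, Finset.mul_sum, ← Finset.sum_sub_distrib]
          exact Finset.sum_congr rfl fun k _ => by ring
      _ = _ := by
          refine Finset.sum_congr rfl fun j _ => ?_
          rw [heval, heval, add_zero]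

lemma key_sum (n : ℕ) (f : Polynomial ℤ) :
    convPow dd n f = ∑ j ∈ range (n + 1),
      (-1 : ℤ) ^ (n - j) * (n.choose j) * f.eval (j : ℤ) := by
  rw [key, fwdDiff_iter_eq_sum_shift]
  simp [zsmul_eq_mul, nsmul_eq_mul]

lemma convPow_add (n : ℕ) (p q : Polynomial ℤ) :
    convPow dd n (p + q) = convPow dd n p + convPow dd n q := by
  simp [key_sum, mul_add, Finset.sum_add_distrib]

lemma convPow_zero' (n : ℕ) : convPow dd n 0 = 0 := by simp [key_sum]

lemma convPow_C_mul (n : ℕ) (a : ℤ) (p : Polynomial ℤ) :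
    convPow dd n (C a * p) = a * convPow dd n p := by
  simp only [key_sum, eval_mul, eval_C, Finset.mul_sum]
  exact Finset.sum_congr rfl fun j _ => by ring

lemma convPow_step (n : ℕ) (f : Polynomial ℤ) :
    convPow dd (n + 1) f = convPow dd n (f.comp (X + 1) - f) := by
  rw [key, key, Function.iterate_succ_apply]
  have h : (fwdDiff (1:ℤ) fun x => eval x f) = fun x => eval x (f.comp (X + 1) - f) := by
    funext x
    simp [fwdDiff, eval_comp]
  rw [h]

lemma descComp (m : ℕ) : (descPochhammer ℤ (m + 1)).comp (X + 1)
    = descPochhammer ℤ (m + 1) + ((m : ℤ[X]) + 1) * descPochhammer ℤ m := by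
  induction m with
  | zero => simp [descPochhammer_one, descPochhammer_zero]
  | succ m ih =>
    rw [descPochhammer_succ_right ℤ (m + 1), mul_comp, sub_comp, X_comp, natCast_comp, ih,
      descPochhammer_succ_right ℤ m]
    push_cast
    ring

lemma convPow_desc : ∀ n k : ℕ,
    convPow dd n (descPochhammer ℤ k) = if k = n then (n.factorial : ℤ) else 0 := by
  intro n
  induction n with
  | zero =>
    intro k
    cases k with
    | zero => simp [convPow, descPochhammer_zero]
    | succ m =>
      show eval 0 _ = _
      rw [descPochhammer_ne_zero_eval_zero (R := ℤ) (n := m + 1) (Nat.succ_ne_zero m)]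
      simp
  | succ n ih =>
    intro k
    rw [convPow_step]
    cases k with
    | zero => simp [descPochhammer_zero, convPow_zero']
    | succ m =>
      have h : (descPochhammer ℤ (m + 1)).comp (X + 1) - descPochhammer ℤ (m + 1)
          = C ((m : ℤ) + 1) * descPochhammer ℤ m := by
        rw [descComp, map_add, C_eq_natCast, map_one]
        ring
      rw [h, convPow_C_mul, ih]
      by_cases hm : m = n
      · subst hm
        simp [Nat.factorial_succ]
        try push_cast
        try ring
      · simp [hm]

lemma convPow_sum {ι : Type} (n : ℕ) (s : Finset ι) (g : ι → Polynomial ℤ) :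
    convPow dd n (∑ i ∈ s, g i) = ∑ i ∈ s, convPow dd n (g i) := by
  classical
  induction s using Finset.induction_on with
  | empty => simp [convPow_zero']
  | @insert a s h ih => rw [Finset.sum_insert h, Finset.sum_insert h, convPow_add, ih]

lemma convPow_of_repr (b : ℕ →₀ ℤ)
    (f : Polynomial ℤ) (hb : f = b.sum fun k a => C a * descPochhammer ℤ k) (n : ℕ) :
    convPow dd n f = b n * n.factorial := by
  rw [hb, Finsupp.sum, convPow_sum]
  have : ∀ k ∈ b.support, convPow dd n (C (b k) * descPochhammer ℤ k)
      = if k = n then b k * n.factorial else 0 := by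
    intro k _
    rw [convPow_C_mul, convPow_desc]
    split <;> ring
  rw [Finset.sum_congr rfl this, Finset.sum_ite_eq' b.support n fun k => b k * n.factorial]
  split
  · rfl
  · rw [Finsupp.notMem_support_iff.mp ‹_›, zero_mul]

lemma f0_eq (N : ℕ) : f0 N = descPochhammer ℤ (N + 1) := by
  induction N with
  | zero => simp [f0, descPochhammer_one]
  | succ N ih =>
    rw [f0, Finset.prod_range_succ, ← f0, ih, C_eq_natCast,
      descPochhammer_succ_right ℤ (N + 1)]

lemma desc_vanish (N : ℕ) : ∀ k, N + 1 ≤ k → ∃ g, descPochhammer ℤ k = f0 N * g := by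
  intro k hk
  induction k, hk using Nat.le_induction with
  | base => exact ⟨1, by rw [f0_eq, mul_one]⟩
  | succ k hk ih =>
    obtain ⟨g, hg⟩ := ih
    exact ⟨g * (X - (k : ℤ[X])), by rw [descPochhammer_succ_right, hg, mul_assoc]⟩

lemma exists_repr : ∀ (d : ℕ) (f : Polynomial ℤ), f.natDegree ≤ d →
    ∃ b : ℕ →₀ ℤ, f = b.sum fun k a => C a * descPochhammer ℤ k := by
  intro d
  induction d with
  | zero =>
    intro f hf
    refine ⟨Finsupp.single 0 (f.coeff 0), ?_⟩
    rw [Finsupp.sum_single_index (by simp), descPochhammer_zero, mul_one]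
    exact (Polynomial.eq_C_of_natDegree_le_zero hf)
  | succ d ih =>
    intro f hf
    by_cases h : f.natDegree ≤ d
    · exact ih f h
    · have hd : f.natDegree = d + 1 := le_antisymm hf (not_le.1 h)
      have hf0 : f ≠ 0 := fun h0 => by simp [h0] at hd
      set a := f.leadingCoeff with ha'
      have ha : a ≠ 0 := leadingCoeff_ne_zero.mpr hf0
      set p := C a * descPochhammer ℤ (d + 1) with hp
      have hmon := monic_descPochhammer ℤ (d + 1)
      have hdesc0 : descPochhammer ℤ (d + 1) ≠ 0 := hmon.ne_zero
      have hdegp : p.degree = f.degree := by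
        rw [hp, degree_mul, degree_C ha, degree_eq_natDegree hf0, hd,
          degree_eq_natDegree hdesc0, descPochhammer_natDegree, zero_add]
      have hlc : p.leadingCoeff = a := by
        rw [hp, leadingCoeff_mul, hmon.leadingCoeff, mul_one, leadingCoeff_C]
      have hsub : (f - p).natDegree ≤ d := by
        by_cases hfp : f - p = 0
        · simp [hfp]
        · have hlt := degree_sub_lt hdegp.symm hf0 (ha' ▸ hlc.symm)
          rw [degree_eq_natDegree hf0, hd] at hlt
          have := (Polynomial.natDegree_lt_iff_degree_lt hfp).mpr
            (lt_of_lt_of_le hlt (by exact_mod_cast le_refl _))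
          omega
      obtain ⟨b, hb⟩ := ih (f - p) hsub
      refine ⟨b + Finsupp.single (d + 1) a, ?_⟩
      rw [Finsupp.sum_add_index (by simp) (by intro k _ x y; rw [map_add, add_mul]),
        Finsupp.sum_single_index (by simp), ← hb, ← hp]
      ring

/-- (i) (δ₁−δ₀)^n lies in n!·Distr(Γ^{[0,n]}): it kills the ideal
(f_{0,n}) and all its values are divisible by n!; (ii) the functionals
(δ₁−δ₀)^n/n! form a ℤ-basis of Distr(Γ⁺) = colim_N Distr(Γ^{[0,N]}). -/
theorem stmt17 :
    (∀ n : ℕ, ∀ g : Polynomial ℤ, convPow dd n (f0 n * g) = 0) ∧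
    (∀ n : ℕ, ∀ f : Polynomial ℤ, (n.factorial : ℤ) ∣ convPow dd n f) ∧
    (∀ φ : Polynomial ℤ →ₗ[ℤ] ℤ,
      (∃ N : ℕ, ∀ g : Polynomial ℤ, φ (f0 N * g) = 0) →
      ∃! c : ℕ →₀ ℤ, ∀ f : Polynomial ℤ,
        φ f = c.sum fun n a => a * (convPow dd n f / (n.factorial : ℤ))) := by
  refine ⟨?_, ?_, ?_⟩
  · intro n g
    rw [key_sum]
    refine Finset.sum_eq_zero fun j hj => ?_
    have h0 : (f0 n).eval (j : ℤ) = 0 := by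
      rw [f0, eval_prod]
      exact Finset.prod_eq_zero hj (by simp)
    rw [eval_mul, h0, zero_mul, mul_zero]
  · intro n f
    obtain ⟨b, hb⟩ := exists_repr f.natDegree f le_rfl
    exact ⟨b n, by rw [convPow_of_repr b f hb n, mul_comm]⟩
  · rintro φ ⟨N, hN⟩
    have hvan : ∀ k, N + 1 ≤ k → φ (descPochhammer ℤ k) = 0 := by
      intro k hk
      obtain ⟨g, hg⟩ := desc_vanish N k hk
      rw [hg]; exact hN g
    set c : ℕ →₀ ℤ := Finsupp.onFinset (Finset.range (N + 1))
      (fun n => if n ≤ N then φ (descPochhammer ℤ n) else 0)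
      (fun n hn => by
        rw [Finset.mem_range]
        by_contra hc
        simp [show ¬ n ≤ N by omega] at hn) with hcdef
    have hcval : ∀ m : ℕ, c m = φ (descPochhammer ℤ m) := by
      intro m
      by_cases hm : m ≤ N
      · simp [hcdef, hm]
      · rw [hvan m (by omega)]
        simp [hcdef, hm]
    have hD : ∀ (f : Polynomial ℤ) (b : ℕ →₀ ℤ),
        f = b.sum (fun k a => C a * descPochhammer ℤ k) →
        ∀ n, convPow dd n f / (n.factorial : ℤ) = b n := by
      intro f b hb n
      rw [convPow_of_repr b f hb n,
        Int.mul_ediv_cancel _ (by exact_mod_cast n.factorial_ne_zero)]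
    have hdesc_repr : ∀ m : ℕ, descPochhammer ℤ m
        = (Finsupp.single m (1 : ℤ)).sum fun k a => C a * descPochhammer ℤ k := by
      intro m
      rw [Finsupp.sum_single_index (by simp), map_one, one_mul]
    have hphi : ∀ f : Polynomial ℤ, ∀ b : ℕ →₀ ℤ,
        f = b.sum (fun k a => C a * descPochhammer ℤ k) →
        φ f = ∑ k ∈ b.support, b k * c k := by
      intro f b hb
      rw [hb, Finsupp.sum, map_sum]
      refine Finset.sum_congr rfl fun k _ => ?_
      rw [← smul_eq_C_mul, map_smul, smul_eq_mul, hcval]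
    refine ⟨c, ?_, ?_⟩
    · intro f
      obtain ⟨b, hb⟩ := exists_repr f.natDegree f le_rfl
      rw [hphi f b hb, Finsupp.sum]
      have h1 : ∑ k ∈ b.support, b k * c k = ∑ k ∈ b.support ∪ c.support, b k * c k :=
        Finset.sum_subset Finset.subset_union_left (fun x _ hx => by
          rw [Finsupp.notMem_support_iff.mp hx, zero_mul])
      have h2 : ∑ n ∈ c.support, c n * (convPow dd n f / (n.factorial : ℤ))
          = ∑ n ∈ b.support ∪ c.support, c n * b n := by
        rw [Finset.sum_congr rfl fun n _ => by rw [hD f b hb n]]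
        exact Finset.sum_subset Finset.subset_union_right (fun x _ hx => by
          rw [Finsupp.notMem_support_iff.mp hx, zero_mul])
      rw [h1, h2]
      exact Finset.sum_congr rfl fun k _ => mul_comm _ _
    · intro c' h
      ext m
      have hm : c' m = φ (descPochhammer ℤ m) := by
        rw [h (descPochhammer ℤ m), Finsupp.sum]
        have : ∀ n ∈ c'.support,
            c' n * (convPow dd n (descPochhammer ℤ m) / (n.factorial : ℤ))
              = if n = m then c' n else 0 := by
          intro n _
          rw [hD _ _ (hdesc_repr m) n, Finsupp.single_apply]
          by_cases hnm : n = m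
          · simp [hnm]
          · simp [hnm, Ne.symm hnm]
        rw [Finset.sum_congr rfl this, Finset.sum_ite_eq' c'.support m (fun n => c' n)]
        split
        · rfl
        · exact Finsupp.notMem_support_iff.mp ‹_›
      rw [hm, hcval m]
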